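/- Let Φ₀ : Pic′ → Pic be the ℤ-linear map defined on the basis by Φ₀(H_q) = 2H_x + H_y − F₁ − F₃ − F₄ − F₇, Φ₀(H_p) = H_x, Φ₀(E₁) = H_x − F₁, Φ₀(E₂) = F₂, Φ₀(E₃) = H_x − F₇, Φ₀(E₄) = F₈, Φ₀(E₅) = H_x − F₄, Φ₀(E₆) = H_x − F₃, Φ₀(E₇) = F₅, Φ₀(E₈) = F₆, and let Ψ₀ : Pic → Pic′ be the ℤ-linear map defined by Ψ₀(H_x) = H_p, Ψ₀(H_y) = H_q + 2H_p − E₁ − E₃ − E₅ − E₆, Ψ₀(F₁) = H_p − E₁, Ψ₀(F₂) = E₂, Ψ₀(F₃) = H_p − E₆, Ψ₀(F₄) = H_p − E₅, Ψ₀(F₅) = E₇, Ψ₀(F₆) = E₈, Ψ₀(F₇) = H_p − E₃, Ψ₀(F₈) = E₄. Then: (i) Ψ₀ ∘ Φ₀ and Φ₀ ∘ Ψ₀ are the identity maps; (ii) Φ₀ preserves the intersection forms; (iii) Φ₀ maps the standard surface roots E₁−E₂, E₃−E₄, H_q−E₁−E₃, H_p−E₅−E₇, E₅−E₆, E₇−E₈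 respectively to the Laguerre surface roots H_x−F₁−F₂, H_x−F₇−F₈, H_y−F₃−F₄, F₄−F₅, F₃−F₄, F₅−F₆; and (iv) Φ₀ maps the standard symmetry roots H_p−E₁−E₂, H_q−E₅−E₆, H_p−E₃−E₄, H_q−E₇−E₈ respectively to the preliminary Laguerre symmetry roots F₁−F₂, H_y−F₁−F₇, F₇−F₈, 2H_x+H_y−F₁−F₃−F₄−F₅−F₆−F₇. -/
import Mathlib


/-- The Picard lattice `Pic` of the blown-up surface: the free `ℤ`-module of rank 10 with basis
`H_x, H_y, F₁, …, F₈`. -/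
abbrev Pic : Type := Fin 10 → ℤ

/-- The `i`-th basis vector of `Pic`. -/
def bv (i : Fin 10) : Pic := fun j => if j = i then 1 else 0

/-- The class `H_x` of a vertical line. -/
def Hx : Pic := bv 0

/-- The class `H_y` of a horizontal line. -/
def Hy : Pic := bv 1

/-- The class `F (k)` of the exceptional divisor `F_{k+1}` (so `F 0 = F₁`, …, `F 7 = F₈`). -/
def F (k : Fin 8) : Pic := bv ⟨k.val + 2, by omega⟩

/-- The intersection form on `Pic`: `H_x•H_x = H_y•H_y = 0`, `H_x•H_y = 1`,
`H_x•F_i = H_y•F_i = 0`, `F_i•F_j = −δ_{ij}`. -/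
def inter (v w : Pic) : ℤ :=
  v 0 * w 1 + v 1 * w 0 - ∑ k : Fin 8, v ⟨k.val + 2, by omega⟩ * w ⟨k.val + 2, by omega⟩


/-- The Picard lattice `Pic′` of the standard `D₅⁽¹⁾` Sakai surface: the free `ℤ`-module of
rank 10 with basis `H_q, H_p, E₁, …, E₈` (realized on the same underlying coordinate module,
with the same intersection form `inter`). -/
abbrev Pic' : Type := Fin 10 → ℤ

/-- The class `H_q`. -/
def Hq : Pic' := bv 0

/-- The class `H_p`. -/
def Hp : Pic' := bv 1

/-- The class `E (k)` of the exceptional divisor `E_{k+1}` (so `E 0 = E₁`, …, `E 7 = E₈`). -/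
def E (k : Fin 8) : Pic' := bv ⟨k.val + 2, by omega⟩

set_option maxHeartbeats 1000000 in
/-- The preliminary change of basis `Φ₀ : Pic′ → Pic` of Lemma 4 of the paper and
its inverse `Ψ₀` are mutually inverse lattice isometries, `Φ₀` matches the standard surface root
basis with the Laguerre surface root basis, and `Φ₀` maps the standard symmetry roots to the
preliminary Laguerre symmetry roots. -/
theorem preliminary_change_of_basis
    (Φ₀ : Pic' →ₗ[ℤ] Pic) (Ψ₀ : Pic →ₗ[ℤ] Pic')
    (hHq : Φ₀ Hq = (2 : ℤ) • Hx + Hy - F 0 - F 2 - F 3 - F 6)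
    (hHp : Φ₀ Hp = Hx)
    (hE1 : Φ₀ (E 0) = Hx - F 0)
    (hE2 : Φ₀ (E 1) = F 1)
    (hE3 : Φ₀ (E 2) = Hx - F 6)
    (hE4 : Φ₀ (E 3) = F 7)
    (hE5 : Φ₀ (E 4) = Hx - F 3)
    (hE6 : Φ₀ (E 5) = Hx - F 2)
    (hE7 : Φ₀ (E 6) = F 4)
    (hE8 : Φ₀ (E 7) = F 5)
    (hHx : Ψ₀ Hx = Hp)
    (hHy : Ψ₀ Hy = Hq + (2 : ℤ) • Hp - E 0 - E 2 - E 4 - E 5)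
    (hF1 : Ψ₀ (F 0) = Hp - E 0)
    (hF2 : Ψ₀ (F 1) = E 1)
    (hF3 : Ψ₀ (F 2) = Hp - E 5)
    (hF4 : Ψ₀ (F 3) = Hp - E 4)
    (hF5 : Ψ₀ (F 4) = E 6)
    (hF6 : Ψ₀ (F 5) = E 7)
    (hF7 : Ψ₀ (F 6) = Hp - E 2)
    (hF8 : Ψ₀ (F 7) = E 3) :
    (∀ v : Pic', Ψ₀ (Φ₀ v) = v) ∧ (∀ w : Pic, Φ₀ (Ψ₀ w) = w) ∧
    (∀ v w : Pic', inter (Φ₀ v) (Φ₀ w) = inter v w) ∧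
    (Φ₀ (E 0 - E 1) = Hx - F 0 - F 1 ∧
     Φ₀ (E 2 - E 3) = Hx - F 6 - F 7 ∧
     Φ₀ (Hq - E 0 - E 2) = Hy - F 2 - F 3 ∧
     Φ₀ (Hp - E 4 - E 6) = F 3 - F 4 ∧
     Φ₀ (E 4 - E 5) = F 2 - F 3 ∧
     Φ₀ (E 6 - E 7) = F 4 - F 5) ∧
    (Φ₀ (Hp - E 0 - E 1) = F 0 - F 1 ∧
     Φ₀ (Hq - E 4 - E 5) = Hy - F 0 - F 6 ∧
     Φ₀ (Hp - E 2 - E 3) = F 6 - F 7 ∧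
     Φ₀ (Hq - E 6 - E 7) = (2 : ℤ) • Hx + Hy - F 0 - F 2 - F 3 - F 4 - F 5 - F 6) := by

  have hfin : ∀ v : Pic', v = v 0 • Hq + v 1 • Hp + v 2 • E 0 + v 3 • E 1 + v 4 • E 2
      + v 5 • E 3 + v 6 • E 4 + v 7 • E 5 + v 8 • E 6 + v 9 • E 7 := by
    intro v
    funext j; fin_cases j <;>
      simp [Hq, Hp, E, bv, Fin.ext_iff,
        show ((3:Fin 10):ℕ)=3 from rfl, show ((4:Fin 10):ℕ)=4 from rfl,
        show ((5:Fin 10):ℕ)=5 from rfl, show ((6:Fin 10):ℕ)=6 from rfl,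
        show ((7:Fin 10):ℕ)=7 from rfl, show ((8:Fin 10):ℕ)=8 from rfl,
        show ((9:Fin 10):ℕ)=9 from rfl,
        show ((3:Fin 8):ℕ)=3 from rfl, show ((4:Fin 8):ℕ)=4 from rfl,
        show ((5:Fin 8):ℕ)=5 from rfl, show ((6:Fin 8):ℕ)=6 from rfl,
        show ((7:Fin 8):ℕ)=7 from rfl]
  have hfin' : ∀ w : Pic, w = w 0 • Hx + w 1 • Hy + w 2 • F 0 + w 3 • F 1 + w 4 • F 2
      + w 5 • F 3 + w 6 • F 4 + w 7 • F 5 + w 8 • F 6 + w 9 • F 7 := hfin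
  have hΦ : ∀ v : Pic', Φ₀ v = v 0 • ((2 : ℤ) • Hx + Hy - F 0 - F 2 - F 3 - F 6)
      + v 1 • Hx + v 2 • (Hx - F 0) + v 3 • F 1 + v 4 • (Hx - F 6) + v 5 • F 7
      + v 6 • (Hx - F 3) + v 7 • (Hx - F 2) + v 8 • F 4 + v 9 • F 5 := by
    intro v
    conv_lhs => rw [hfin v]
    simp only [map_add, map_smul, hHq, hHp, hE1, hE2, hE3, hE4, hE5, hE6, hE7, hE8]
  have hΨ : ∀ w : Pic, Ψ₀ w = w 0 • Hp
      + w 1 • (Hq + (2 : ℤ) • Hp - E 0 - E 2 - E 4 - E 5) + w 2 • (Hp - E 0) + w 3 • E 1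
      + w 4 • (Hp - E 5) + w 5 • (Hp - E 4) + w 6 • E 6 + w 7 • E 7
      + w 8 • (Hp - E 2) + w 9 • E 3 := by
    intro w
    conv_lhs => rw [hfin' w]
    simp only [map_add, map_smul, hHx, hHy, hF1, hF2, hF3, hF4, hF5, hF6, hF7, hF8]
  have hI : ∀ a b : Pic, inter a b = a 0 * b 1 + a 1 * b 0
      - (a 2 * b 2 + a 3 * b 3 + a 4 * b 4 + a 5 * b 5
        + a 6 * b 6 + a 7 * b 7 + a 8 * b 8 + a 9 * b 9) := by
    intro a b
    simp only [inter, Fin.sum_univ_eight,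
      show ((⟨2, by omega⟩ : Fin 10)) = 2 from rfl, show ((⟨3, by omega⟩ : Fin 10)) = 3 from rfl,
      show ((⟨4, by omega⟩ : Fin 10)) = 4 from rfl, show ((⟨5, by omega⟩ : Fin 10)) = 5 from rfl,
      show ((⟨6, by omega⟩ : Fin 10)) = 6 from rfl, show ((⟨7, by omega⟩ : Fin 10)) = 7 from rfl,
      show ((⟨8, by omega⟩ : Fin 10)) = 8 from rfl, show ((⟨9, by omega⟩ : Fin 10)) = 9 from rfl,
      show ((0:Fin 8):ℕ)=0 from rfl, show ((1:Fin 8):ℕ)=1 from rfl,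
      show ((2:Fin 8):ℕ)=2 from rfl, show ((3:Fin 8):ℕ)=3 from rfl,
      show ((4:Fin 8):ℕ)=4 from rfl, show ((5:Fin 8):ℕ)=5 from rfl,
      show ((6:Fin 8):ℕ)=6 from rfl, show ((7:Fin 8):ℕ)=7 from rfl]
    try ring
  have hcoord : ∀ (v : Pic') (j : Fin 10),
      (v 0 • ((2 : ℤ) • Hx + Hy - F 0 - F 2 - F 3 - F 6)
      + v 1 • Hx + v 2 • (Hx - F 0) + v 3 • F 1 + v 4 • (Hx - F 6) + v 5 • F 7
      + v 6 • (Hx - F 3) + v 7 • (Hx - F 2) + v 8 • F 4 + v 9 • F 5) j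
      = v 0 * ((2 : ℤ) • Hx + Hy - F 0 - F 2 - F 3 - F 6) j
      + v 1 * Hx j + v 2 * (Hx - F 0) j + v 3 * F 1 j + v 4 * (Hx - F 6) j + v 5 * F 7 j
      + v 6 * (Hx - F 3) j + v 7 * (Hx - F 2) j + v 8 * F 4 j + v 9 * F 5 j := by
    intro v j
    simp [Pi.add_apply, Pi.smul_apply, smul_eq_mul]
  refine ⟨?_, ?_, ?_, ⟨?_, ?_, ?_, ?_, ?_, ?_⟩, ⟨?_, ?_, ?_, ?_⟩⟩
  · intro v
    rw [hΦ v]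
    simp only [map_add, map_sub, map_smul, hHx, hHy, hF1, hF2, hF3, hF4, hF5, hF6, hF7, hF8]
    conv_rhs => rw [hfin v]
    module
  · intro w
    rw [hΨ w]
    simp only [map_add, map_sub, map_smul, hHq, hHp, hE1, hE2, hE3, hE4, hE5, hE6, hE7, hE8]
    conv_rhs => rw [hfin' w]
    module
  · intro v w
    rw [hΦ v, hΦ w, hI, hI]
    simp only [hcoord]
    simp only [Hx, Hy, F, bv, Pi.add_apply, Pi.sub_apply, Pi.smul_apply, smul_eq_mul,
      Fin.ext_iff, Fin.val_zero, Fin.val_one,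
      show ((0:Fin 8):ℕ)=0 from rfl, show ((1:Fin 8):ℕ)=1 from rfl,
      show ((2:Fin 8):ℕ)=2 from rfl, show ((3:Fin 8):ℕ)=3 from rfl,
      show ((4:Fin 8):ℕ)=4 from rfl, show ((5:Fin 8):ℕ)=5 from rfl,
      show ((6:Fin 8):ℕ)=6 from rfl, show ((7:Fin 8):ℕ)=7 from rfl,
      show ((0:Fin 10):ℕ)=0 from rfl, show ((1:Fin 10):ℕ)=1 from rfl,
      show ((2:Fin 10):ℕ)=2 from rfl, show ((3:Fin 10):ℕ)=3 from rfl,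
      show ((4:Fin 10):ℕ)=4 from rfl, show ((5:Fin 10):ℕ)=5 from rfl,
      show ((6:Fin 10):ℕ)=6 from rfl, show ((7:Fin 10):ℕ)=7 from rfl,
      show ((8:Fin 10):ℕ)=8 from rfl, show ((9:Fin 10):ℕ)=9 from rfl]
    norm_num
    try ring
  all_goals
    simp only [map_add, map_sub, map_smul, hHq, hHp, hE1, hE2, hE3, hE4, hE5, hE6, hE7, hE8]
    try module
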